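/- arXiv:2505.06769 — 2 statements merged into one kernel-verified Lean document; each statement's English description precedes it below -/
import Mathlib

section
/- Let M be a Markov chain with n = |S| states, targets T, and weight function w : T → [0,∞), in which every state can reach T along edges; let s ∉ T and γ ≥ 0. Let f : S → ℝ be any vector with f ≤ val_{M[s=γ]} pointwise, where val_{M[s=γ]} is the weighted reachability value vector of the reduced MC M[s = γ], and set γ' := ∑_{s'} δ(s,s') f(s'). Then for every ε > 0 with γ − ε ≥ 0: if γ' + p_min^n · ε > γ, then val_M(s) > γ − ε, where val_M is the weighted reachability value vector of M. -/
/-- A finite Markov chain: transition function `δ` (nonnegative, rows sum to 1)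
together with a set `T` of absorbing target states. There is an edge `s → s'`
iff `δ s s' > 0`. -/
structure MC (S : Type) [Fintype S] [DecidableEq S] where
  δ : S → S → ℝ
  T : Finset S
  nonneg : ∀ s s' : S, 0 ≤ δ s s'
  rowsum : ∀ s : S, ∑ s' : S, δ s s' = 1
  absorbing : ∀ t ∈ T, δ t t = 1

variable {S : Type} [Fintype S] [DecidableEq S]

/-- Edge relation of a Markov chain: `s → s'` iff `δ s s' > 0`. -/
def MC.edge (M : MC S) (a b : S) : Prop := 0 < M.δ a b

/-- `pathLen r n a b`: there is a path of length `n` from `a` to `b` along `r`. -/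
def pathLen (r : S → S → Prop) : ℕ → S → S → Prop
  | 0 => fun a b => a = b
  | n + 1 => fun a c => ∃ b, r a b ∧ pathLen r n b c

/-- `reaches r A s`: `s` can reach the set `A` along the relation `r`. -/
def reaches (r : S → S → Prop) (A : Set S) (s : S) : Prop :=
  ∃ n, ∃ a ∈ A, pathLen r n s a

/-- Length of a shortest path from `s` to the set `A` along `r`. -/
noncomputable def distTo (r : S → S → Prop) (A : Set S) (s : S) : ℕ :=
  sInf {n | ∃ a ∈ A, pathLen r n s a}

/-- Level `0`: the targets together with all states that cannot reach the targets. -/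
def MC.level0 (M : MC S) : Set S :=
  {s | s ∈ M.T ∨ ¬ reaches M.edge (M.T : Set S) s}

/-- The levels of a Markov chain: `ℓ_0` is `level0`, and for `i ≥ 1`, `ℓ_i` is the
set of states whose shortest edge-path distance to `ℓ_0` is exactly `i`. -/
noncomputable def MC.levelSet (M : MC S) : ℕ → Set S
  | 0 => M.level0
  | i + 1 => {s | distTo M.edge M.level0 s = i + 1}

/-- `M` has (exactly) `k` levels: `ℓ_k` is the last nonempty level. -/
def MC.hasLevels (M : MC S) (k : ℕ) : Prop :=
  (M.levelSet k).Nonempty ∧ ∀ i, k < i → M.levelSet i = ∅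

/-- One-step transition matrix of the Markov chain. -/
noncomputable def MC.P (M : MC S) : Matrix S S ℝ := Matrix.of M.δ

/-- Weighted reachability value `val(s) = E_s[w(X_{t*}) · 1{t* < ∞}]`, where `t*` is
the first hitting time of `T`. Since `T` is absorbing, this equals the supremum
(monotone limit) over `n` of `∑_{t ∈ T} (δⁿ)(s,t)·w(t)`. -/
noncomputable def MC.reachVal (M : MC S) (w : S → ℝ) (s : S) : ℝ :=
  ⨆ n : ℕ, ∑ t ∈ M.T, (M.P ^ n) s t * w t

/-- Stochastic shortest path value `val(s) = E_s[∑_{t=0}^{t*} w(X_t)]`, where `t*` is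
the first hitting time of `T`: the expected weight collected strictly before `T`
(states outside `T`, counted via the `n`-step distributions) plus the expected weight
of the first target state hit. -/
noncomputable def MC.sspVal (M : MC S) (w : S → ℝ) (s : S) : ℝ :=
  (∑' n : ℕ, ∑ s' ∈ Finset.univ.filter (fun x => x ∉ M.T), (M.P ^ n) s s' * w s')
    + M.reachVal w s

/-- Smallest positive transition probability of the Markov chain. -/
noncomputable def MC.pmin (M : MC S) : ℝ :=
  sInf {p : ℝ | 0 < p ∧ ∃ s s' : S, M.δ s s' = p}

/-- Reachability Bellman update. -/
noncomputable def MC.reachUpdate (M : MC S) (w : S → ℝ) (v : S → ℝ) : S → ℝ :=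
  fun s => if s ∈ M.T then w s else ∑ s' : S, M.δ s s' * v s'

/-- SSP Bellman update. -/
noncomputable def MC.sspUpdate (M : MC S) (w : S → ℝ) (v : S → ℝ) : S → ℝ :=
  fun s => if s ∈ M.T then w s else w s + ∑ s' : S, M.δ s s' * v s'

/-- The reduced Markov chain `M[s = ·]`: the state `s` is made absorbing (its row of
`δ` replaced by the point mass at `s`) and added to the target set. -/
def MC.reduce (M : MC S) (s : S) : MC S where
  δ := fun a b => if a = s then (if b = s then 1 else 0) else M.δ a b
  T := insert s M.T
  nonneg := by
    intro a b
    by_cases h : a = s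
    · by_cases h' : b = s <;> simp [h, h']
    · simpa [h] using M.nonneg a b
  rowsum := by
    intro a
    by_cases h : a = s
    · simp [h]
    · simpa [h] using M.rowsum a
  absorbing := by
    intro t ht
    rcases Finset.mem_insert.mp ht with h | h
    · simp [h]
    · by_cases h' : t = s
      · simp [h']
      · simpa [h'] using M.absorbing t h

/-- Probability, in `M`, of ever visiting the state `s` when starting from `a`,
i.e. `P_a(∃ t ≥ 0, X_t = s)` (computed as a reachability value after making `s`
absorbing, which does not change the dynamics before the first visit to `s`). -/
noncomputable def MC.hitProb (M : MC S) (a s : S) : ℝ :=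
  (M.reduce s).reachVal (fun b => if b = s then 1 else 0) a

/-- Probability of having reached `T` within `i` steps, `P_s(∃ t ≤ i, X_t ∈ T)`;
since `T` is absorbing this equals `∑_{t ∈ T} (δ^i)(s,t)`. -/
noncomputable def MC.hitBy (M : MC S) (s : S) (i : ℕ) : ℝ :=
  ∑ t ∈ M.T, (M.P ^ i) s t

namespace MCAux
open Finset Filter Topology

variable {S : Type} [Fintype S] [DecidableEq S]

/-- Partial sums defining the reachability value. -/
noncomputable def Fseq (N : MC S) (w : S → ℝ) (n : ℕ) (a : S) : ℝ :=
  ∑ t ∈ N.T, (N.P ^ n) a t * w t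

lemma reachVal_eq_iSup (N : MC S) (w : S → ℝ) (a : S) :
    N.reachVal w a = ⨆ n, Fseq N w n a := rfl

lemma P_apply (N : MC S) (a b : S) : N.P a b = N.δ a b := rfl

lemma P_pow_nonneg (N : MC S) : ∀ (n : ℕ) (a b : S), 0 ≤ (N.P ^ n) a b := by
  intro n
  induction n with
  | zero =>
    intro a b
    rw [pow_zero]
    by_cases h : a = b <;> simp [Matrix.one_apply, h]
  | succ n ih =>
    intro a b
    rw [pow_succ, Matrix.mul_apply]
    exact Finset.sum_nonneg fun c _ => mul_nonneg (ih a c) (N.nonneg c b)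

lemma P_pow_rowsum (N : MC S) : ∀ (n : ℕ) (a : S), ∑ b : S, (N.P ^ n) a b = 1 := by
  intro n
  induction n with
  | zero =>
    intro a
    simp [Matrix.one_apply]
  | succ n ih =>
    intro a
    rw [pow_succ]
    simp only [Matrix.mul_apply]
    rw [Finset.sum_comm]
    have : ∀ c ∈ Finset.univ, ∑ b : S, (N.P ^ n) a c * N.P c b = (N.P ^ n) a c := by
      intro c _
      rw [← Finset.mul_sum]
      have := N.rowsum c
      simp only [P_apply]
      rw [this, mul_one]
    rw [Finset.sum_congr rfl this]
    exact ih a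

lemma P_pow_le_one (N : MC S) (n : ℕ) (a b : S) : (N.P ^ n) a b ≤ 1 := by
  have h := P_pow_rowsum N n a
  calc (N.P ^ n) a b ≤ ∑ c : S, (N.P ^ n) a c :=
        Finset.single_le_sum (fun c _ => P_pow_nonneg N n a c) (Finset.mem_univ b)
    _ = 1 := h

lemma absorbing_pointmass (N : MC S) {t : S} (ht : t ∈ N.T) (b : S) :
    N.δ t b = if b = t then 1 else 0 := by
  by_cases hb : b = t
  · simp [hb, N.absorbing t ht]
  · simp only [hb, if_false]
    have hsum := N.rowsum t
    have h1 : ∑ b ∈ (Finset.univ.erase t), N.δ t b = 0 := by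
      have := Finset.add_sum_erase Finset.univ (N.δ t) (Finset.mem_univ t)
      rw [← this, N.absorbing t ht] at hsum
      linarith
    have := (Finset.sum_eq_zero_iff_of_nonneg (fun c _ => N.nonneg t c)).mp h1 b
      (Finset.mem_erase.mpr ⟨hb, Finset.mem_univ b⟩)
    exact this

lemma P_pow_target (N : MC S) {t : S} (ht : t ∈ N.T) :
    ∀ (n : ℕ) (b : S), (N.P ^ n) t b = if b = t then 1 else 0 := by
  intro n
  induction n with
  | zero =>
    intro b
    rw [pow_zero, Matrix.one_apply]
    by_cases h : b = t
    · simp [h]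
    · rw [if_neg h, if_neg (fun ht' => h ht'.symm)]
  | succ n ih =>
    intro b
    rw [pow_succ', Matrix.mul_apply]
    have : ∀ c ∈ Finset.univ, N.P t c * (N.P ^ n) c b
        = (if c = t then 1 else 0) * (N.P ^ n) c b := by
      intro c _
      rw [P_apply, absorbing_pointmass N ht]
    rw [Finset.sum_congr rfl this]
    simp [ih b]

lemma P_pow_mono_target (N : MC S) {t : S} (ht : t ∈ N.T) (n : ℕ) (a : S) :
    (N.P ^ n) a t ≤ (N.P ^ (n + 1)) a t := by
  rw [pow_succ, Matrix.mul_apply]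
  calc (N.P ^ n) a t = (N.P ^ n) a t * N.P t t := by
        rw [P_apply, N.absorbing t ht, mul_one]
    _ ≤ ∑ c : S, (N.P ^ n) a c * N.P c t :=
        Finset.single_le_sum (fun c _ => mul_nonneg (P_pow_nonneg N n a c) (N.nonneg c t))
          (Finset.mem_univ t)

lemma Fseq_mono (N : MC S) {w : S → ℝ} (hw : ∀ t ∈ N.T, 0 ≤ w t) (a : S) :
    Monotone (fun n => Fseq N w n a) := by
  apply monotone_nat_of_le_succ
  intro n
  apply Finset.sum_le_sum
  intro t ht
  exact mul_le_mul_of_nonneg_right (P_pow_mono_target N ht n a) (hw t ht)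

lemma Fseq_nonneg (N : MC S) {w : S → ℝ} (hw : ∀ t ∈ N.T, 0 ≤ w t) (n : ℕ) (a : S) :
    0 ≤ Fseq N w n a :=
  Finset.sum_nonneg fun t ht => mul_nonneg (P_pow_nonneg N n a t) (hw t ht)

lemma Fseq_le (N : MC S) {w : S → ℝ} (hw : ∀ t ∈ N.T, 0 ≤ w t) (n : ℕ) (a : S) :
    Fseq N w n a ≤ ∑ t ∈ N.T, w t := by
  apply Finset.sum_le_sum
  intro t ht
  calc (N.P ^ n) a t * w t ≤ 1 * w t :=
        mul_le_mul_of_nonneg_right (P_pow_le_one N n a t) (hw t ht)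
    _ = w t := one_mul _

lemma Fseq_bddAbove (N : MC S) {w : S → ℝ} (hw : ∀ t ∈ N.T, 0 ≤ w t) (a : S) :
    BddAbove (Set.range (fun n => Fseq N w n a)) := by
  refine ⟨∑ t ∈ N.T, w t, ?_⟩
  rintro x ⟨n, rfl⟩
  exact Fseq_le N hw n a

lemma Fseq_tendsto (N : MC S) {w : S → ℝ} (hw : ∀ t ∈ N.T, 0 ≤ w t) (a : S) :
    Tendsto (fun n => Fseq N w n a) atTop (𝓝 (N.reachVal w a)) := by
  rw [reachVal_eq_iSup]
  exact tendsto_atTop_ciSup (Fseq_mono N hw a) (Fseq_bddAbove N hw a)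

lemma Fseq_succ (N : MC S) (w : S → ℝ) (n : ℕ) (a : S) :
    Fseq N w (n + 1) a = ∑ b : S, N.δ a b * Fseq N w n b := by
  unfold Fseq
  simp only [pow_succ', Matrix.mul_apply, Finset.sum_mul, Finset.mul_sum]
  rw [Finset.sum_comm]
  apply Finset.sum_congr rfl
  intro b _
  apply Finset.sum_congr rfl
  intro t _
  rw [P_apply]
  ring

lemma reachVal_bellman (N : MC S) {w : S → ℝ} (hw : ∀ t ∈ N.T, 0 ≤ w t) (a : S) :
    N.reachVal w a = ∑ b : S, N.δ a b * N.reachVal w b := by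
  have h1 : Tendsto (fun n => Fseq N w (n + 1) a) atTop (𝓝 (N.reachVal w a)) :=
    (tendsto_add_atTop_iff_nat 1).mpr (Fseq_tendsto N hw a)
  have h2 : Tendsto (fun n => ∑ b : S, N.δ a b * Fseq N w n b) atTop
      (𝓝 (∑ b : S, N.δ a b * N.reachVal w b)) := by
    apply tendsto_finset_sum
    intro b _
    exact (Fseq_tendsto N hw b).const_mul _
  have heq : (fun n => Fseq N w (n + 1) a) = fun n => ∑ b : S, N.δ a b * Fseq N w n b := by
    funext n; exact Fseq_succ N w n a
  rw [heq] at h1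
  exact tendsto_nhds_unique h1 h2

lemma reachVal_target (N : MC S) (w : S → ℝ) {t : S} (ht : t ∈ N.T) :
    N.reachVal w t = w t := by
  have : ∀ n, Fseq N w n t = w t := by
    intro n
    unfold Fseq
    rw [Finset.sum_eq_single_of_mem t ht]
    · rw [P_pow_target N ht n t, if_pos rfl, one_mul]
    · intro b _ hb
      rw [P_pow_target N ht n b, if_neg hb, zero_mul]
  rw [reachVal_eq_iSup]
  simp [this]

lemma reachVal_nonneg (N : MC S) {w : S → ℝ} (hw : ∀ t ∈ N.T, 0 ≤ w t) (a : S) :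
    0 ≤ N.reachVal w a := by
  rw [reachVal_eq_iSup]
  exact le_trans (Fseq_nonneg N hw 0 a) (le_ciSup (Fseq_bddAbove N hw a) 0)

lemma Fseq_le_one (N : MC S) {w : S → ℝ} (hw1 : ∀ t ∈ N.T, w t ≤ 1)
    (hw : ∀ t ∈ N.T, 0 ≤ w t) (n : ℕ) (a : S) : Fseq N w n a ≤ 1 := by
  calc Fseq N w n a ≤ ∑ t ∈ N.T, (N.P ^ n) a t := by
        apply Finset.sum_le_sum
        intro t ht
        calc (N.P ^ n) a t * w t ≤ (N.P ^ n) a t * 1 :=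
              mul_le_mul_of_nonneg_left (hw1 t ht) (P_pow_nonneg N n a t)
          _ = (N.P ^ n) a t := mul_one _
    _ ≤ ∑ t : S, (N.P ^ n) a t :=
        Finset.sum_le_sum_of_subset_of_nonneg (Finset.subset_univ _)
          (fun c _ _ => P_pow_nonneg N n a c)
    _ = 1 := P_pow_rowsum N n a

lemma reachVal_le_one (N : MC S) {w : S → ℝ} (hw1 : ∀ t ∈ N.T, w t ≤ 1)
    (hw : ∀ t ∈ N.T, 0 ≤ w t) (a : S) : N.reachVal w a ≤ 1 := by
  rw [reachVal_eq_iSup]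
  exact ciSup_le fun n => Fseq_le_one N hw1 hw n a


section Pmin
variable [Nonempty S]

lemma pmin_mem (N : MC S) : N.pmin ∈ {p : ℝ | 0 < p ∧ ∃ s s' : S, N.δ s s' = p} := by
  have hfin : {p : ℝ | 0 < p ∧ ∃ s s' : S, N.δ s s' = p}.Finite := by
    apply Set.Finite.subset (Set.finite_range (Function.uncurry N.δ))
    rintro p ⟨_, s, s', rfl⟩
    exact ⟨(s, s'), rfl⟩
  have hne : {p : ℝ | 0 < p ∧ ∃ s s' : S, N.δ s s' = p}.Nonempty := by
    obtain ⟨s0⟩ := (inferInstance : Nonempty S)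
    have hpos : ∃ s', 0 < N.δ s0 s' := by
      by_contra hno
      push_neg at hno
      have hz : ∀ s', N.δ s0 s' = 0 := fun s' => le_antisymm (hno s') (N.nonneg s0 s')
      have hrs := N.rowsum s0
      rw [Finset.sum_eq_zero (fun s' _ => hz s')] at hrs
      norm_num at hrs
    obtain ⟨s', hs'⟩ := hpos
    exact ⟨N.δ s0 s', hs', s0, s', rfl⟩
  exact hne.csInf_mem hfin

lemma pmin_pos (N : MC S) : 0 < N.pmin := (pmin_mem N).1

lemma pmin_le (N : MC S) {a b : S} (h : 0 < N.δ a b) : N.pmin ≤ N.δ a b := by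
  have hfin : {p : ℝ | 0 < p ∧ ∃ s s' : S, N.δ s s' = p}.Finite := by
    apply Set.Finite.subset (Set.finite_range (Function.uncurry N.δ))
    rintro p ⟨_, s, s', rfl⟩
    exact ⟨(s, s'), rfl⟩
  exact csInf_le hfin.bddBelow ⟨h, a, b, rfl⟩

end Pmin

/-- Product lower bound on matrix power entries along a path. -/
lemma pow_entry_ge (N : MC S) (r : S → S → Prop) (c : ℝ) (hc : 0 ≤ c)
    (hr : ∀ a b, r a b → c ≤ N.δ a b) :
    ∀ (m : ℕ) (a b : S), pathLen r m a b → c ^ m ≤ (N.P ^ m) a b := by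
  intro m
  induction m with
  | zero =>
    intro a b hab
    cases hab
    simp [Matrix.one_apply]
  | succ m ih =>
    rintro a b ⟨x, hax, hxb⟩
    rw [pow_succ' N.P m, Matrix.mul_apply]
    have h1 : c * c ^ m ≤ N.P a x * (N.P ^ m) x b := by
      apply mul_le_mul (hr a x hax) (ih x b hxb) (pow_nonneg hc m)
      exact N.nonneg a x
    calc c ^ (m + 1) = c * c ^ m := by ring
      _ ≤ N.P a x * (N.P ^ m) x b := h1
      _ ≤ ∑ y : S, N.P a y * (N.P ^ m) y b :=
          Finset.single_le_sum
            (fun y _ => mul_nonneg (N.nonneg a y) (P_pow_nonneg N m y b))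
            (Finset.mem_univ x)

/-- Shortest-path distance to the target set. -/
noncomputable def Dd (M : MC S) (a : S) : ℕ := sInf {n | ∃ t ∈ M.T, pathLen M.edge n a t}

lemma Dd_mem (M : MC S) {a : S} (ha : reaches M.edge (M.T : Set S) a) :
    ∃ t ∈ M.T, pathLen M.edge (Dd M a) a t := by
  have hne : {n | ∃ t ∈ M.T, pathLen M.edge n a t}.Nonempty := by
    obtain ⟨n, t, ht, hp⟩ := ha
    exact ⟨n, t, ht, hp⟩
  exact Nat.sInf_mem hne

lemma Dd_le (M : MC S) {a : S} {n : ℕ} (h : ∃ t ∈ M.T, pathLen M.edge n a t) :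
    Dd M a ≤ n := Nat.sInf_le h

lemma Dd_edge_le (M : MC S) {a b : S} (hb : reaches M.edge (M.T : Set S) b)
    (hab : M.edge a b) : Dd M a ≤ Dd M b + 1 := by
  obtain ⟨t, ht, hp⟩ := Dd_mem M hb
  exact Dd_le M ⟨t, ht, b, hab, hp⟩

lemma Dd_pos_of_not_target (M : MC S) {a : S} (ha : reaches M.edge (M.T : Set S) a)
    (hna : a ∉ M.T) : 0 < Dd M a := by
  rcases Nat.eq_zero_or_pos (Dd M a) with h | h
  swap
  · exact h
  · exfalso
    obtain ⟨t, ht, hp⟩ := Dd_mem M ha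
    rw [h] at hp
    cases hp
    exact hna ht

lemma Dd_descend (M : MC S) (hreach : ∀ a : S, reaches M.edge (M.T : Set S) a)
    {a : S} (ha : 0 < Dd M a) : ∃ b, M.edge a b ∧ Dd M b + 1 = Dd M a := by
  obtain ⟨m, hm⟩ := Nat.exists_eq_add_of_lt ha
  rw [zero_add] at hm
  obtain ⟨t, ht, hp⟩ := Dd_mem M (hreach a)
  rw [hm] at hp
  obtain ⟨b, hab, hbt⟩ := hp
  have h1 : Dd M b ≤ m := Dd_le M ⟨t, ht, hbt⟩
  have h2 : Dd M a ≤ Dd M b + 1 := Dd_edge_le M (hreach b) hab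
  refine ⟨b, hab, ?_⟩
  omega

/-- Every value below `Dd M a` is realized by some state. -/
lemma Dd_vals (M : MC S) (hreach : ∀ a : S, reaches M.edge (M.T : Set S) a) :
    ∀ (k : ℕ) (a : S), Dd M a = k → ∀ j ≤ k, ∃ b, Dd M b = j := by
  intro k
  induction k with
  | zero =>
    intro a hk j hj
    interval_cases j
    exact ⟨a, hk⟩
  | succ k ih =>
    intro a hk j hj
    rcases Nat.eq_or_lt_of_le hj with h | h
    · exact ⟨a, by omega⟩
    · obtain ⟨b, _, hb⟩ := Dd_descend M hreach (a := a) (by omega)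
      exact ih b (by omega) j (by omega)

lemma Dd_card_bound (M : MC S) (hreach : ∀ a : S, reaches M.edge (M.T : Set S) a)
    (s : S) : Dd M s + 1 ≤ Fintype.card S := by
  have hv : ∀ j : Fin (Dd M s + 1), ∃ b, Dd M b = (j : ℕ) :=
    fun j => Dd_vals M hreach (Dd M s) s rfl j (Nat.lt_succ_iff.mp j.isLt)
  choose g hg using hv
  have hinj : Function.Injective g := by
    intro i j hij
    apply Fin.ext
    rw [← hg i, ← hg j, hij]
  calc Dd M s + 1 = Fintype.card (Fin (Dd M s + 1)) := by simp
    _ ≤ Fintype.card S := Fintype.card_le_of_injective g hinj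

/-- A shortest path, away from the maximum-distance state `s`, avoids `s`. -/
lemma Dd_tail_path (M : MC S) (hreach : ∀ a : S, reaches M.edge (M.T : Set S) a) (s : S) :
    ∀ (m : ℕ) (a : S), Dd M a = m → m < Dd M s →
      ∃ t ∈ M.T, pathLen (fun x y => M.edge x y ∧ x ≠ s) m a t := by
  intro m
  induction m with
  | zero =>
    intro a ha _
    obtain ⟨t, ht, hp⟩ := Dd_mem M (hreach a)
    rw [ha] at hp
    exact ⟨t, ht, hp⟩
  | succ m ih =>
    intro a ha hlt
    have hane : a ≠ s := fun h => by rw [h] at ha; omega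
    obtain ⟨t, ht, hp⟩ := Dd_mem M (hreach a)
    rw [ha] at hp
    obtain ⟨b, hab, hbt⟩ := hp
    have h1 : Dd M b ≤ m := Dd_le M ⟨t, ht, hbt⟩
    have h2 : Dd M a ≤ Dd M b + 1 := Dd_edge_le M (hreach b) hab
    have hb : Dd M b = m := by omega
    obtain ⟨t', ht', hp'⟩ := ih b hb (by omega)
    exact ⟨t', ht', b, ⟨hab, hane⟩, hp'⟩

section Transfer
variable [Nonempty S]

/-- Under global reachability of `T`, the probability of eventually hitting `T` is 1. -/
lemma reach_one (M : MC S) (hreach : ∀ a : S, reaches M.edge (M.T : Set S) a) (a : S) :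
    M.reachVal (fun _ => 1) a = 1 := by
  set η : S → ℝ := M.reachVal (fun _ => 1) with hη
  have hw : ∀ t ∈ M.T, (0:ℝ) ≤ (fun _ => (1:ℝ)) t := fun _ _ => zero_le_one
  have hle : ∀ b, η b ≤ 1 := fun b =>
    reachVal_le_one M (fun _ _ => le_refl 1) hw b
  have hT : ∀ t ∈ M.T, η t = 1 := fun t ht => reachVal_target M _ ht
  have hbell : ∀ b, η b = ∑ c : S, M.δ b c * η c := fun b => reachVal_bellman M hw b
  obtain ⟨a0, _, ha0⟩ := Finset.exists_mem_eq_inf' (Finset.univ_nonempty) η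
  set m := Finset.univ.inf' Finset.univ_nonempty η with hm
  have hmin : ∀ b, m ≤ η b := fun b => Finset.inf'_le η (Finset.mem_univ b)
  have hclosed : ∀ x, η x = m → ∀ b, M.edge x b → η b = m := by
    intro x hx b hxb
    have hzero : ∑ c : S, M.δ x c * (η c - m) = 0 := by
      have : ∑ c : S, M.δ x c * (η c - m)
          = (∑ c : S, M.δ x c * η c) - (∑ c : S, M.δ x c) * m := by
        rw [Finset.sum_mul, ← Finset.sum_sub_distrib]
        apply Finset.sum_congr rfl
        intro c _
        ring
      rw [this, M.rowsum x, one_mul, ← hbell x, hx, sub_self]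
    have hterm := (Finset.sum_eq_zero_iff_of_nonneg
      (fun c _ => mul_nonneg (M.nonneg x c) (by linarith [hmin c]))).mp hzero b
      (Finset.mem_univ b)
    rcases mul_eq_zero.mp hterm with h0 | h0
    · exact absurd h0 (ne_of_gt hxb)
    · linarith
  have hpath : ∀ (n : ℕ) (x y : S), pathLen M.edge n x y → η x = m → η y = m := by
    intro n
    induction n with
    | zero => intro x y hxy hx; cases hxy; exact hx
    | succ n ih =>
      rintro x y ⟨b, hxb, hby⟩ hx
      exact ih b y hby (hclosed x hx b hxb)
  have hm1 : m = 1 := by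
    obtain ⟨n, t, ht, hp⟩ := hreach a0
    have := hpath n a0 t hp ha0.symm
    rw [hT t ht] at this
    exact this.symm
  have := hmin a
  rw [hm1] at this
  exact le_antisymm (hle a) this

/-- Transfer: a subharmonic function bounded by `w` on targets is below the value. -/
lemma le_reachVal (M : MC S) (hreach : ∀ a : S, reaches M.edge (M.T : Set S) a)
    {w : S → ℝ} (hw : ∀ t ∈ M.T, 0 ≤ w t)
    (h : S → ℝ) (hT : ∀ t ∈ M.T, h t ≤ w t)
    (hsub : ∀ a, a ∉ M.T → h a ≤ ∑ b : S, M.δ a b * h b) (a : S) :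
    h a ≤ M.reachVal w a := by
  have hPh : ∀ x, h x ≤ ∑ b : S, M.δ x b * h b := by
    intro x
    by_cases hx : x ∈ M.T
    · have : ∀ b ∈ Finset.univ, M.δ x b * h b = (if b = x then 1 else 0) * h b := by
        intro b _
        rw [absorbing_pointmass M hx b]
      rw [Finset.sum_congr rfl this]
      simp
    · exact hsub x hx
  have hk : ∀ (k : ℕ) (x : S), h x ≤ ∑ b : S, (M.P ^ k) x b * h b := by
    intro k
    induction k with
    | zero =>
      intro x
      simp [Matrix.one_apply]
    | succ k ih =>
      intro x
      calc h x ≤ ∑ b : S, (M.P ^ k) x b * h b := ih x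
        _ ≤ ∑ b : S, (M.P ^ k) x b * (∑ c : S, M.δ b c * h c) := by
            apply Finset.sum_le_sum
            intro b _
            exact mul_le_mul_of_nonneg_left (hPh b) (P_pow_nonneg M k x b)
        _ = ∑ c : S, (M.P ^ (k + 1)) x c * h c := by
            rw [pow_succ]
            simp only [Matrix.mul_apply, Finset.sum_mul, Finset.mul_sum]
            rw [Finset.sum_comm]
            apply Finset.sum_congr rfl
            intro b _
            apply Finset.sum_congr rfl
            intro c _
            rw [P_apply]
            ring
  set C : ℝ := (Finset.univ.sup' Finset.univ_nonempty h) ⊔ 0 with hC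
  have hCb : ∀ b, h b ≤ C := fun b =>
    le_trans (Finset.le_sup' h (Finset.mem_univ b)) le_sup_left
  have hC0 : 0 ≤ C := le_sup_right
  have hbound : ∀ k : ℕ, h a ≤ Fseq M w k a + (1 - Fseq M (fun _ => 1) k a) * C := by
    intro k
    have hsplit : ∑ b : S, (M.P ^ k) a b * h b
        = (∑ b ∈ M.T, (M.P ^ k) a b * h b) + ∑ b ∈ M.Tᶜ, (M.P ^ k) a b * h b :=
      (Finset.sum_add_sum_compl M.T _).symm
    have h1 : ∑ b ∈ M.T, (M.P ^ k) a b * h b ≤ Fseq M w k a := by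
      apply Finset.sum_le_sum
      intro b hb
      exact mul_le_mul_of_nonneg_left (hT b hb) (P_pow_nonneg M k a b)
    have h2 : ∑ b ∈ M.Tᶜ, (M.P ^ k) a b * h b ≤ (∑ b ∈ M.Tᶜ, (M.P ^ k) a b) * C := by
      rw [Finset.sum_mul]
      apply Finset.sum_le_sum
      intro b _
      calc (M.P ^ k) a b * h b ≤ (M.P ^ k) a b * C :=
            mul_le_mul_of_nonneg_left (hCb b) (P_pow_nonneg M k a b)
        _ = (M.P ^ k) a b * C := rfl
    have h3 : ∑ b ∈ M.Tᶜ, (M.P ^ k) a b = 1 - Fseq M (fun _ => 1) k a := by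
      have := Finset.sum_add_sum_compl M.T (fun b => (M.P ^ k) a b)
      rw [P_pow_rowsum M k a] at this
      have hF : Fseq M (fun _ => 1) k a = ∑ b ∈ M.T, (M.P ^ k) a b := by
        unfold Fseq
        simp
      rw [hF]
      linarith
    calc h a ≤ ∑ b : S, (M.P ^ k) a b * h b := hk k a
      _ = _ + _ := hsplit
      _ ≤ Fseq M w k a + (1 - Fseq M (fun _ => 1) k a) * C := by
          rw [← h3]
          exact add_le_add h1 h2
  have ht1 : Tendsto (fun k => Fseq M w k a) atTop (𝓝 (M.reachVal w a)) :=
    Fseq_tendsto M hw a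
  have ht2 : Tendsto (fun k => (1 - Fseq M (fun _ => 1) k a) * C) atTop (𝓝 0) := by
    have := Fseq_tendsto M (w := fun _ => 1) (fun _ _ => zero_le_one) a
    rw [reach_one M hreach a] at this
    have h0 : Tendsto (fun k => (1 - Fseq M (fun _ => 1) k a) * C) atTop (𝓝 ((1 - 1) * C)) :=
      ((tendsto_const_nhds.sub this).mul tendsto_const_nhds)
    simpa using h0
  have hlim : Tendsto (fun k => Fseq M w k a + (1 - Fseq M (fun _ => 1) k a) * C) atTop
      (𝓝 (M.reachVal w a)) := by
    have := ht1.add ht2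
    simpa using this
  exact ge_of_tendsto hlim (Filter.Eventually.of_forall hbound)

end Transfer
end MCAux



/-- Approximate verification of a guess (lower bound): with `n = |S|`,
if `f` is a pointwise lower bound on the value vector of the reduced Markov chain
`M[s = γ]`, `γ' = ∑_{s'} δ(s,s')·f(s')`, `ε > 0`, `γ - ε ≥ 0`, and
`γ' + p_min^n·ε > γ`, then `val_M(s) > γ - ε`. -/
theorem stmt_6 {S : Type} [Fintype S] [DecidableEq S] [Nonempty S]
    (M : MC S) (hreach : ∀ a : S, reaches M.edge (M.T : Set S) a)
    (w : S → ℝ) (hw : ∀ t ∈ M.T, 0 ≤ w t)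
    (s : S) (hs : s ∉ M.T) (γ : ℝ) (hγ : 0 ≤ γ)
    (f : S → ℝ)
    (hf : ∀ a : S, f a ≤ (M.reduce s).reachVal (Function.update w s γ) a)
    (ε : ℝ) (hε : 0 < ε) (hγε : 0 ≤ γ - ε)
    (h : γ < (∑ s' : S, M.δ s s' * f s') + M.pmin ^ (Fintype.card S) * ε) :
    γ - ε < M.reachVal w s := by
  classical
  set N := M.reduce s with hN
  set wu : S → ℝ := Function.update w s γ with hwu
  set ws : S → ℝ := fun b => if b = s then 1 else 0 with hws
  set w0 : S → ℝ := fun b => if b = s then 0 else 1 with hw0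
  set u : S → ℝ := N.reachVal wu with hu
  set q : S → ℝ := N.reachVal ws with hq
  have hNT : N.T = insert s M.T := rfl
  have hδ' : ∀ a, a ≠ s → ∀ b, N.δ a b = M.δ a b := by
    intro a ha b
    show (if a = s then (if b = s then (1:ℝ) else 0) else M.δ a b) = M.δ a b
    rw [if_neg ha]
  have hwu_nonneg : ∀ t ∈ N.T, 0 ≤ wu t := by
    intro t ht
    rcases Finset.mem_insert.mp ht with rfl | ht'
    · rw [hwu, Function.update_self]; exact hγ
    · have hts : t ≠ s := fun hh => hs (hh ▸ ht')
      rw [hwu, Function.update_of_ne hts]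
      exact hw t ht'
  have hws_nonneg : ∀ t ∈ N.T, 0 ≤ ws t := by
    intro t _
    by_cases hh : t = s <;> simp [hws, hh]
  have hws_le1 : ∀ t ∈ N.T, ws t ≤ 1 := by
    intro t _
    by_cases hh : t = s <;> simp [hws, hh]
  have hw0_nonneg : ∀ t ∈ N.T, 0 ≤ w0 t := by
    intro t _
    by_cases hh : t = s <;> simp [hw0, hh]
  have hsN : s ∈ N.T := Finset.mem_insert_self _ _
  have hus : u s = γ := by
    rw [hu, MCAux.reachVal_target N wu hsN, hwu, Function.update_self]
  have hqs : q s = 1 := by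
    rw [hq, MCAux.reachVal_target N ws hsN]
    simp [hws]
  have hut : ∀ t ∈ M.T, u t = w t := by
    intro t ht
    have hts : t ≠ s := fun hh => hs (hh ▸ ht)
    rw [hu, MCAux.reachVal_target N wu (Finset.mem_insert_of_mem ht), hwu,
      Function.update_of_ne hts]
  have hqt : ∀ t ∈ M.T, q t = 0 := by
    intro t ht
    have hts : t ≠ s := fun hh => hs (hh ▸ ht)
    rw [hq, MCAux.reachVal_target N ws (Finset.mem_insert_of_mem ht)]
    simp [hws, hts]
  have hq_le1 : ∀ b, q b ≤ 1 := fun b => MCAux.reachVal_le_one N hws_le1 hws_nonneg b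
  have hu_h : ∀ a, a ≠ s → u a = ∑ b : S, M.δ a b * u b := by
    intro a ha
    rw [hu, MCAux.reachVal_bellman N hwu_nonneg a]
    exact Finset.sum_congr rfl fun b _ => by rw [hδ' a ha b]
  have hq_h : ∀ a, a ≠ s → q a = ∑ b : S, M.δ a b * q b := by
    intro a ha
    rw [hq, MCAux.reachVal_bellman N hws_nonneg a]
    exact Finset.sum_congr rfl fun b _ => by rw [hδ' a ha b]
  -- pmin facts
  have hpminpos : 0 < M.pmin := MCAux.pmin_pos M
  obtain ⟨n0, t0, ht0, _⟩ := hreach s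
  have hpmin1 : M.pmin ≤ 1 := by
    have h1 : (0:ℝ) < M.δ t0 t0 := by rw [M.absorbing t0 ht0]; norm_num
    have := MCAux.pmin_le M h1
    rwa [M.absorbing t0 ht0] at this
  -- shortest path decomposition
  have hk : 0 < MCAux.Dd M s := MCAux.Dd_pos_of_not_target M (hreach s) hs
  obtain ⟨m, hm⟩ := Nat.exists_eq_succ_of_ne_zero (Nat.pos_iff_ne_zero.mp hk)
  obtain ⟨t, ht, hp⟩ := MCAux.Dd_mem M (hreach s)
  rw [hm] at hp
  obtain ⟨a1, hsa1, hpath⟩ := hp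
  have hDa1 : MCAux.Dd M a1 = m := by
    have h1 := MCAux.Dd_le M ⟨t, ht, hpath⟩
    have h2 := MCAux.Dd_edge_le M (hreach a1) hsa1
    omega
  obtain ⟨t', ht', hp'⟩ := MCAux.Dd_tail_path M hreach s m a1 hDa1 (by omega)
  -- product lower bound along the s-avoiding path, in the reduced chain
  have hprod : M.pmin ^ m ≤ (N.P ^ m) a1 t' := by
    refine MCAux.pow_entry_ge N _ M.pmin (le_of_lt hpminpos) ?_ m a1 t' hp'
    rintro x y ⟨hxy, hx⟩
    rw [hδ' x hx y]
    exact MCAux.pmin_le M hxy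
  have ht'N : t' ∈ N.T := Finset.mem_insert_of_mem ht'
  have ht's : t' ≠ s := fun hh => hs (hh ▸ ht')
  have hρ : M.pmin ^ m ≤ MCAux.Fseq N w0 m a1 := by
    calc M.pmin ^ m ≤ (N.P ^ m) a1 t' := hprod
      _ = (N.P ^ m) a1 t' * w0 t' := by rw [hw0]; simp [ht's]
      _ ≤ ∑ t'' ∈ N.T, (N.P ^ m) a1 t'' * w0 t'' :=
          Finset.sum_le_sum_of_subset_of_nonneg
            (Finset.singleton_subset_iff.mpr ht'N)
            (fun c _ _ => mul_nonneg (MCAux.P_pow_nonneg N m a1 c) (hw0_nonneg c ‹c ∈ N.T›))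
            |>.trans_eq' (by rw [Finset.sum_singleton])
  have hqa1 : q a1 ≤ 1 - M.pmin ^ m := by
    rw [hq, MCAux.reachVal_eq_iSup]
    apply ciSup_le
    intro j
    set K := max j m with hK
    have h1 : MCAux.Fseq N ws j a1 ≤ MCAux.Fseq N ws K a1 :=
      MCAux.Fseq_mono N hws_nonneg a1 (le_max_left j m)
    have h2 : MCAux.Fseq N w0 m a1 ≤ MCAux.Fseq N w0 K a1 :=
      MCAux.Fseq_mono N hw0_nonneg a1 (le_max_right j m)
    have h3 : MCAux.Fseq N ws K a1 + MCAux.Fseq N w0 K a1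
        = MCAux.Fseq N (fun _ => (1:ℝ)) K a1 := by
      unfold MCAux.Fseq
      rw [← Finset.sum_add_distrib]
      apply Finset.sum_congr rfl
      intro t'' _
      by_cases hh : t'' = s <;> simp [hws, hw0, hh] <;> ring
    have h4 : MCAux.Fseq N (fun _ => (1:ℝ)) K a1 ≤ 1 :=
      MCAux.Fseq_le_one N (fun _ _ => le_refl 1) (fun _ _ => zero_le_one) K a1
    linarith
  -- the quantity d = 1 - β'
  set d : ℝ := ∑ b : S, M.δ s b * (1 - q b) with hd
  have hdq : ∑ b : S, M.δ s b * q b = 1 - d := by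
    rw [hd]
    have hsplit : ∑ b : S, M.δ s b * (1 - q b)
        = (∑ b : S, M.δ s b) - ∑ b : S, M.δ s b * q b := by
      rw [← Finset.sum_sub_distrib]
      exact Finset.sum_congr rfl fun b _ => by ring
    rw [hsplit, M.rowsum s]
    ring
  have hdlb : M.pmin ^ (m + 1) ≤ d := by
    have hstep : M.pmin * M.pmin ^ m ≤ M.δ s a1 * (1 - q a1) := by
      apply mul_le_mul (MCAux.pmin_le M hsa1) (by linarith) (pow_nonneg (le_of_lt hpminpos) m)
      exact le_of_lt (lt_of_lt_of_le hsa1 (le_refl _))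
    calc M.pmin ^ (m + 1) = M.pmin * M.pmin ^ m := by ring
      _ ≤ M.δ s a1 * (1 - q a1) := hstep
      _ ≤ d := by
          rw [hd]
          have hnn : ∀ b ∈ (Finset.univ : Finset S), 0 ≤ M.δ s b * (1 - q b) := by
            intro b _
            have := hq_le1 b
            have h1 : (0:ℝ) ≤ 1 - q b := by linarith
            exact mul_nonneg (M.nonneg s b) h1
          exact Finset.single_le_sum hnn (Finset.mem_univ a1)
  have hcard : m + 1 ≤ Fintype.card S := by
    have := MCAux.Dd_card_bound M hreach s
    omega
  have hdn : M.pmin ^ (Fintype.card S) ≤ d :=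
    le_trans (pow_le_pow_of_le_one (le_of_lt hpminpos) hpmin1 hcard) hdlb
  have hdpos : 0 < d := lt_of_lt_of_le (pow_pos hpminpos _) hdlb
  -- the shift constant c
  set γf : ℝ := ∑ s' : S, M.δ s s' * f s' with hγf
  set c : ℝ := max ((γ - γf) / d) 0 with hc
  have hc0 : 0 ≤ c := le_max_right _ _
  have hcε : c < ε := by
    apply max_lt _ hε
    rw [div_lt_iff₀ hdpos]
    have : γ - γf < M.pmin ^ (Fintype.card S) * ε := by rw [hγf]; linarith
    calc γ - γf < M.pmin ^ (Fintype.card S) * ε := this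
      _ ≤ d * ε := mul_le_mul_of_nonneg_right hdn (le_of_lt hε)
      _ = ε * d := mul_comm d ε
  have hcd : γ - γf ≤ c * d := by
    have h1 : (γ - γf) / d ≤ c := le_max_left _ _
    calc γ - γf = ((γ - γf) / d) * d := by field_simp
      _ ≤ c * d := mul_le_mul_of_nonneg_right h1 (le_of_lt hdpos)
  -- the certificate
  set g : S → ℝ := fun b => u b - c * q b with hg
  have hgT : ∀ t ∈ M.T, g t ≤ w t := by
    intro t ht
    rw [hg]
    simp only
    rw [hut t ht, hqt t ht]
    ring_nf
    exact le_refl _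
  have hU' : γf ≤ ∑ b : S, M.δ s b * u b := by
    rw [hγf]
    exact Finset.sum_le_sum fun b _ => mul_le_mul_of_nonneg_left (hf b) (M.nonneg s b)
  have hgsplit : ∀ a : S, ∑ b : S, M.δ a b * g b
      = (∑ b : S, M.δ a b * u b) - c * ∑ b : S, M.δ a b * q b := by
    intro a
    rw [Finset.mul_sum, ← Finset.sum_sub_distrib]
    exact Finset.sum_congr rfl fun b _ => by rw [hg]; ring
  have hgsub : ∀ a, a ∉ M.T → g a ≤ ∑ b : S, M.δ a b * g b := by
    intro a ha
    by_cases has : a = s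
    · subst has
      rw [hgsplit a, hdq, hg]
      simp only
      rw [hus, hqs]
      have : γ ≤ (∑ b : S, M.δ a b * u b) + c * d := by
        calc γ = γf + (γ - γf) := by ring
          _ ≤ (∑ b : S, M.δ a b * u b) + c * d := add_le_add hU' hcd
      linarith
    · rw [hgsplit a, hg]
      simp only
      rw [hu_h a has, hq_h a has]
  have hmain := MCAux.le_reachVal M hreach hw g hgT hgsub s
  rw [hg] at hmain
  simp only at hmain
  rw [hus, hqs] at hmain
  linarith
end

section
/- Let M be a Markov chain with n = |S| states, targets T, and weight function w : T → [0,∞), in which every state can reach T along edges; let s ∉ T and γ ≥ 0. Let f : S → ℝ be any vector with f ≥ val_{M[s=γ]} pointwise, where val_{M[s=γ]} is the weighted reachability value vector of the reduced MC M[s = γ], and set γ' := ∑_{s'} δ(s,s') f(s'). Then for every ε > 0: if γ' − p_min^n · ε < γ, then val_M(s) < γ + ε, where val_M is the weighted reachability value vector of M. -/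
variable {S : Type} [Fintype S] [DecidableEq S]

section Aux

open Filter Topology

namespace MC

variable (N : MC S)

lemma delta_le_one (a b : S) : N.δ a b ≤ 1 := by
  have h := N.rowsum a
  have h2 : N.δ a b ≤ ∑ b', N.δ a b' :=
    Finset.single_le_sum (fun c _ => N.nonneg a c) (Finset.mem_univ b)
  linarith

lemma target_row {t : S} (ht : t ∈ N.T) {b : S} (hb : b ≠ t) : N.δ t b = 0 := by
  have h1 := N.rowsum t
  have h2 := N.absorbing t ht
  have h4 : N.δ t t + ∑ b' ∈ Finset.univ.erase t, N.δ t b' = 1 := by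
    rw [Finset.add_sum_erase _ _ (Finset.mem_univ t)]; exact h1
  have h3 : ∑ b' ∈ Finset.univ.erase t, N.δ t b' = 0 := by linarith
  have h5 : ∀ b' ∈ Finset.univ.erase t, 0 ≤ N.δ t b' := fun c _ => N.nonneg t c
  exact (Finset.sum_eq_zero_iff_of_nonneg h5).mp h3 b (Finset.mem_erase.mpr ⟨hb, Finset.mem_univ b⟩)

lemma P_apply (a b : S) : N.P a b = N.δ a b := rfl

lemma P_pow_nonneg : ∀ (n : ℕ) (a b : S), 0 ≤ (N.P ^ n) a b := by
  intro n
  induction n with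
  | zero =>
    intro a b
    simp only [pow_zero, Matrix.one_apply]
    split <;> norm_num
  | succ n ih =>
    intro a b
    rw [pow_succ', Matrix.mul_apply]
    exact Finset.sum_nonneg fun c _ => mul_nonneg (N.nonneg a c) (ih c b)

lemma P_pow_rowsum : ∀ (n : ℕ) (a : S), ∑ b, (N.P ^ n) a b = 1 := by
  intro n
  induction n with
  | zero =>
    intro a
    simp [Matrix.one_apply]
  | succ n ih =>
    intro a
    simp only [pow_succ', Matrix.mul_apply]
    rw [Finset.sum_comm]
    have : ∀ c ∈ Finset.univ, ∑ b, N.P a c * (N.P ^ n) c b = N.δ a c := by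
      intro c _
      rw [← Finset.mul_sum, ih c, mul_one]; rfl
    rw [Finset.sum_congr rfl this, N.rowsum a]

lemma P_pow_le_one (n : ℕ) (a b : S) : (N.P ^ n) a b ≤ 1 := by
  have h := N.P_pow_rowsum n a
  have h2 : (N.P ^ n) a b ≤ ∑ b', (N.P ^ n) a b' :=
    Finset.single_le_sum (fun c _ => N.P_pow_nonneg n a c) (Finset.mem_univ b)
  linarith

lemma P_pow_target {t : S} (ht : t ∈ N.T) : ∀ (n : ℕ) (b : S),
    (N.P ^ n) t b = if t = b then 1 else 0 := by
  intro n
  induction n with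
  | zero => intro b; simp [Matrix.one_apply]
  | succ n ih =>
    intro b
    rw [pow_succ', Matrix.mul_apply]
    rw [Finset.sum_eq_single t]
    · rw [P_apply, N.absorbing t ht, one_mul, ih b]
    · intro c _ hc
      rw [P_apply, N.target_row ht (Ne.symm hc).symm, zero_mul]
    · intro hmem; exact absurd (Finset.mem_univ t) hmem

/-- The partial sums appearing in `reachVal`. -/
noncomputable def seq (w : S → ℝ) (a : S) (n : ℕ) : ℝ := ∑ t ∈ N.T, (N.P ^ n) a t * w t

lemma reachVal_eq_iSup_seq (w : S → ℝ) (a : S) : N.reachVal w a = ⨆ n, N.seq w a n := rfl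

lemma seq_zero (w : S → ℝ) (a : S) : N.seq w a 0 = if a ∈ N.T then w a else 0 := by
  unfold seq
  simp [Matrix.one_apply]

lemma seq_succ (w : S → ℝ) (a : S) (n : ℕ) :
    N.seq w a (n + 1) = ∑ b, N.δ a b * N.seq w b n := by
  unfold seq
  simp only [pow_succ', Matrix.mul_apply, Finset.sum_mul, Finset.mul_sum]
  rw [Finset.sum_comm]
  apply Finset.sum_congr rfl
  intro b _
  apply Finset.sum_congr rfl
  intro t _
  rw [P_apply]
  ring

lemma seq_nonneg {w : S → ℝ} (hw : ∀ t ∈ N.T, 0 ≤ w t) (a : S) (n : ℕ) :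
    0 ≤ N.seq w a n :=
  Finset.sum_nonneg fun t ht => mul_nonneg (N.P_pow_nonneg n a t) (hw t ht)

lemma seq_le_sum {w : S → ℝ} (hw : ∀ t ∈ N.T, 0 ≤ w t) (a : S) (n : ℕ) :
    N.seq w a n ≤ ∑ t ∈ N.T, w t := by
  apply Finset.sum_le_sum
  intro t ht
  calc (N.P ^ n) a t * w t ≤ 1 * w t :=
        mul_le_mul_of_nonneg_right (N.P_pow_le_one n a t) (hw t ht)
    _ = w t := one_mul _

lemma seq_mono {w : S → ℝ} (hw : ∀ t ∈ N.T, 0 ≤ w t) (a : S) :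
    Monotone (N.seq w a) := by
  apply monotone_nat_of_le_succ
  intro n
  apply Finset.sum_le_sum
  intro t ht
  apply mul_le_mul_of_nonneg_right _ (hw t ht)
  rw [pow_succ, Matrix.mul_apply]
  calc (N.P ^ n) a t = (N.P ^ n) a t * N.P t t := by
        rw [P_apply, N.absorbing t ht, mul_one]
    _ ≤ ∑ c, (N.P ^ n) a c * N.P c t :=
        Finset.single_le_sum (f := fun c => (N.P ^ n) a c * N.P c t)
          (fun c _ => mul_nonneg (N.P_pow_nonneg n a c) (N.nonneg c t)) (Finset.mem_univ t)

lemma seq_bddAbove {w : S → ℝ} (hw : ∀ t ∈ N.T, 0 ≤ w t) (a : S) :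
    BddAbove (Set.range (N.seq w a)) := by
  refine ⟨∑ t ∈ N.T, w t, ?_⟩
  rintro x ⟨n, rfl⟩
  exact N.seq_le_sum hw a n

lemma seq_le_reachVal {w : S → ℝ} (hw : ∀ t ∈ N.T, 0 ≤ w t) (a : S) (n : ℕ) :
    N.seq w a n ≤ N.reachVal w a :=
  le_ciSup (N.seq_bddAbove hw a) n

lemma reachVal_le {w : S → ℝ} {a : S} {C : ℝ} (hC : ∀ n, N.seq w a n ≤ C) :
    N.reachVal w a ≤ C := ciSup_le hC

lemma reachVal_nonneg {w : S → ℝ} (hw : ∀ t ∈ N.T, 0 ≤ w t) (a : S) :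
    0 ≤ N.reachVal w a :=
  le_trans (N.seq_nonneg hw a 0) (N.seq_le_reachVal hw a 0)

lemma reachVal_target {w : S → ℝ} {t : S} (ht : t ∈ N.T) : N.reachVal w t = w t := by
  have hseq : ∀ n, N.seq w t n = w t := by
    intro n
    unfold seq
    rw [Finset.sum_eq_single t]
    · rw [N.P_pow_target ht n t, if_pos rfl, one_mul]
    · intro c _ hc
      rw [N.P_pow_target ht n c, if_neg (Ne.symm hc), zero_mul]
    · intro hmem; exact absurd ht hmem
  rw [reachVal_eq_iSup_seq]
  simp [hseq]

lemma tendsto_seq {w : S → ℝ} (hw : ∀ t ∈ N.T, 0 ≤ w t) (a : S) :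
    Tendsto (N.seq w a) atTop (𝓝 (N.reachVal w a)) :=
  tendsto_atTop_ciSup (N.seq_mono hw a) (N.seq_bddAbove hw a)

lemma reachVal_harmonic {w : S → ℝ} (hw : ∀ t ∈ N.T, 0 ≤ w t) (a : S) :
    N.reachVal w a = ∑ b, N.δ a b * N.reachVal w b := by
  have h1 : Tendsto (fun n => N.seq w a (n + 1)) atTop (𝓝 (N.reachVal w a)) :=
    (N.tendsto_seq hw a).comp (tendsto_add_atTop_nat 1)
  have h2 : Tendsto (fun n => ∑ b, N.δ a b * N.seq w b n) atTop
      (𝓝 (∑ b, N.δ a b * N.reachVal w b)) :=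
    tendsto_finset_sum _ fun b _ => (N.tendsto_seq hw b).const_mul _
  have heq : (fun n => N.seq w a (n + 1)) = fun n => ∑ b, N.δ a b * N.seq w b n := by
    funext n; exact N.seq_succ w a n
  rw [heq] at h1
  exact tendsto_nhds_unique h1 h2

lemma reachVal_le_of_superharmonic {w : S → ℝ} (hw : ∀ t ∈ N.T, 0 ≤ w t)
    (u : S → ℝ)
    (huT : ∀ t ∈ N.T, w t ≤ u t)
    (hu0 : ∀ b, 0 ≤ u b)
    (huH : ∀ a, a ∉ N.T → ∑ b, N.δ a b * u b ≤ u a) (a : S) :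
    N.reachVal w a ≤ u a := by
  have step : ∀ a, ∑ b, N.δ a b * u b ≤ u a := by
    intro a
    by_cases ha : a ∈ N.T
    · rw [Finset.sum_eq_single a]
      · rw [N.absorbing a ha, one_mul]
      · intro c _ hc
        rw [N.target_row ha hc, zero_mul]
      · intro hmem; exact absurd (Finset.mem_univ a) hmem
    · exact huH a ha
  have key : ∀ n a, N.seq w a n ≤ u a := by
    intro n
    induction n with
    | zero =>
      intro a
      rw [seq_zero]
      split
      · next ha => exact huT a ha
      · exact hu0 a
    | succ n ih =>
      intro a
      rw [seq_succ]
      calc ∑ b, N.δ a b * N.seq w b n ≤ ∑ b, N.δ a b * u b :=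
            Finset.sum_le_sum fun b _ =>
              mul_le_mul_of_nonneg_left (ih b) (N.nonneg a b)
        _ ≤ u a := step a
  exact ciSup_le fun n => key n a

lemma pmin_mem [Nonempty S] : N.pmin ∈ {p : ℝ | 0 < p ∧ ∃ a b : S, N.δ a b = p} := by
  have hfin : {p : ℝ | 0 < p ∧ ∃ a b : S, N.δ a b = p}.Finite := by
    apply Set.Finite.subset (Set.finite_range (fun q : S × S => N.δ q.1 q.2))
    rintro p ⟨_, a, b, rfl⟩
    exact ⟨(a, b), rfl⟩
  have hne : {p : ℝ | 0 < p ∧ ∃ a b : S, N.δ a b = p}.Nonempty := by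
    obtain ⟨a⟩ := ‹Nonempty S›
    obtain ⟨b, hb⟩ : ∃ b, 0 < N.δ a b := by
      by_contra hcon
      push_neg at hcon
      have hz : ∀ b, N.δ a b = 0 := fun b => le_antisymm (hcon b) (N.nonneg a b)
      have hrs := N.rowsum a
      rw [Finset.sum_congr rfl (fun b _ => hz b)] at hrs
      simp at hrs
    exact ⟨N.δ a b, hb, a, b, rfl⟩
  exact hne.csInf_mem hfin

lemma pmin_pos [Nonempty S] : 0 < N.pmin := N.pmin_mem.1

lemma pmin_le [Nonempty S] {a b : S} (hab : 0 < N.δ a b) : N.pmin ≤ N.δ a b := by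
  have hfin : {p : ℝ | 0 < p ∧ ∃ a b : S, N.δ a b = p}.Finite := by
    apply Set.Finite.subset (Set.finite_range (fun q : S × S => N.δ q.1 q.2))
    rintro p ⟨_, a, b, rfl⟩
    exact ⟨(a, b), rfl⟩
  exact csInf_le hfin.bddBelow ⟨hab, a, b, rfl⟩

lemma pmin_le_one [Nonempty S] : N.pmin ≤ 1 := by
  obtain ⟨-, a, b, hab⟩ := N.pmin_mem
  rw [← hab]
  exact N.delta_le_one a b

/-- Lower bound on matrix powers along paths. -/
lemma P_pow_path_le {c : ℝ} (hc : 0 ≤ c) :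
    ∀ (m : ℕ) (ν : ℕ → S), (∀ i < m, c ≤ N.δ (ν i) (ν (i + 1))) →
      c ^ m ≤ (N.P ^ m) (ν 0) (ν m) := by
  intro m
  induction m with
  | zero => intro ν _; simp [Matrix.one_apply]
  | succ m ih =>
    intro ν hν
    have hsum : (N.P ^ (m + 1)) (ν 0) (ν (m + 1))
        = ∑ b, N.P (ν 0) b * (N.P ^ m) b (ν (m + 1)) := by
      rw [pow_succ', Matrix.mul_apply]
    rw [hsum]
    have h1 : c ^ m ≤ (N.P ^ m) (ν 1) (ν (m + 1)) := by
      have := ih (fun i => ν (i + 1)) (fun i hi => hν (i + 1) (by omega))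
      simpa using this
    calc c ^ (m + 1) = c * c ^ m := by ring
      _ ≤ N.δ (ν 0) (ν 1) * (N.P ^ m) (ν 1) (ν (m + 1)) := by
          apply mul_le_mul (hν 0 (by omega)) h1 (pow_nonneg hc m)
          exact le_trans hc (hν 0 (by omega))
      _ ≤ ∑ b, N.P (ν 0) b * (N.P ^ m) b (ν (m + 1)) :=
          Finset.single_le_sum (f := fun b => N.P (ν 0) b * (N.P ^ m) b (ν (m + 1)))
            (fun b _ => mul_nonneg (N.nonneg (ν 0) b) (N.P_pow_nonneg m b (ν (m + 1))))
            (Finset.mem_univ (ν 1))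

lemma reduce_T (s : S) : (N.reduce s).T = insert s N.T := rfl

lemma reduce_δ_of_ne {a : S} {s : S} (ha : a ≠ s) (b : S) :
    (N.reduce s).δ a b = N.δ a b := by
  simp [MC.reduce, ha]

end MC

lemma pathLen_iff_fun (r : S → S → Prop) (m : ℕ) (a t : S) :
    pathLen r m a t ↔ ∃ ν : ℕ → S, ν 0 = a ∧ ν m = t ∧ ∀ i < m, r (ν i) (ν (i + 1)) := by
  induction m generalizing a with
  | zero =>
    constructor
    · intro hp
      exact ⟨fun _ => a, rfl, hp.symm ▸ rfl, by omega⟩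
    · rintro ⟨ν, rfl, rfl, -⟩
      rfl
  | succ m ih =>
    constructor
    · rintro ⟨b, hab, hp⟩
      obtain ⟨ν, hν0, hνm, hνe⟩ := (ih b).mp hp
      refine ⟨fun i => if i = 0 then a else ν (i - 1), rfl, by simp [hνm], ?_⟩
      intro i hi
      rcases Nat.eq_zero_or_pos i with rfl | hpos
      · simpa [hν0] using hab
      · have h1 : i ≠ 0 := by omega
        have h2 : i + 1 ≠ 0 := by omega
        simp only [if_neg h1, if_neg h2]
        have : i - 1 + 1 = i + 1 - 1 := by omega
        rw [show i + 1 - 1 = i - 1 + 1 by omega]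
        exact hνe (i - 1) (by omega)
    · rintro ⟨ν, rfl, hνm, hνe⟩
      refine ⟨ν 1, hνe 0 (by omega), (ih (ν 1)).mpr ⟨fun i => ν (i + 1), rfl, ?_, ?_⟩⟩
      · simpa using hνm
      · intro i hi
        exact hνe (i + 1) (by omega)

lemma splice_path {r : S → S → Prop} {m : ℕ} {ν : ℕ → S}
    (hedge : ∀ k < m, r (ν k) (ν (k + 1))) {i j : ℕ} (hij : i < j) (hjm : j ≤ m)
    (heq : ν i = ν j) :
    ∃ ν' : ℕ → S, ν' 0 = ν 0 ∧ ν' (m - (j - i)) = ν m ∧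
      ∀ k < m - (j - i), r (ν' k) (ν' (k + 1)) := by
  refine ⟨fun k => if k ≤ i then ν k else ν (k + (j - i)), by simp, ?_, ?_⟩
  · dsimp only
    by_cases hk : m - (j - i) ≤ i
    · have h1 : j = m := by omega
      have h2 : m - (j - i) = i := by omega
      simp only [h2, le_refl, if_pos]
      rw [heq, h1]
    · rw [if_neg hk]
      congr 1
      omega
  · intro k hk
    dsimp only
    by_cases h1 : k + 1 ≤ i
    · rw [if_pos (by omega : k ≤ i), if_pos h1]
      exact hedge k (by omega)
    · by_cases h2 : k ≤ i
      · have hki : k = i := by omega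
        rw [if_pos h2, if_neg h1, hki, heq]
        have : i + 1 + (j - i) = j + 1 := by omega
        rw [this]
        exact hedge j (by omega)
      · rw [if_neg h2, if_neg (by omega : ¬ k + 1 ≤ i)]
        have : k + 1 + (j - i) = k + (j - i) + 1 := by omega
        rw [this]
        exact hedge (k + (j - i)) (by omega)

/-- A minimal path to the target set: length between 1 and `card S - 1`, and never
revisits the start state. -/
lemma exists_short_path [Nonempty S] (r : S → S → Prop) (T : Finset S) (s : S)
    (h : reaches r (T : Set S) s) (hs : s ∉ T) :
    ∃ m, 1 ≤ m ∧ m ≤ Fintype.card S - 1 ∧ ∃ ν : ℕ → S, ν 0 = s ∧ ν m ∈ T ∧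
      (∀ i < m, r (ν i) (ν (i + 1))) ∧ ∀ i, 0 < i → i ≤ m → ν i ≠ s := by
  classical
  have hex : ∃ m, ∃ t ∈ T, pathLen r m s t := by
    obtain ⟨n, t, ht, hp⟩ := h
    exact ⟨n, t, ht, hp⟩
  let m := Nat.find hex
  obtain ⟨t, ht, hp⟩ := Nat.find_spec hex
  obtain ⟨ν, hν0, hνm, hνe⟩ := (pathLen_iff_fun r m s t).mp hp
  have hm1 : 1 ≤ m := by
    rcases Nat.eq_zero_or_pos m with h0 | h1
    · exfalso
      have : s = t := by rw [← hν0, ← hνm, h0]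
      exact hs (this ▸ ht)
    · exact h1
  have hmin : ∀ m' < m, ¬ ∃ t ∈ T, pathLen r m' s t := fun m' hm' => Nat.find_min hex hm'
  have hcard : m ≤ Fintype.card S - 1 := by
    by_contra hcon
    push_neg at hcon
    have hlt : Fintype.card S < Fintype.card (Fin (m + 1)) := by
      simp only [Fintype.card_fin]
      have h1 : 1 ≤ Fintype.card S := Fintype.card_pos
      omega
    obtain ⟨x, y, hxy, hfeq⟩ := Fintype.exists_ne_map_eq_of_card_lt
      (fun x : Fin (m + 1) => ν x) hlt
    have hmain : ∀ i j : ℕ, i < j → j ≤ m → ν i = ν j → False := by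
      intro i j hij hjm heq
      obtain ⟨ν', hν'0, hν'm, hν'e⟩ := splice_path hνe hij hjm heq
      apply hmin (m - (j - i)) (by omega)
      refine ⟨t, ht, (pathLen_iff_fun r _ s t).mpr ⟨ν', by rw [hν'0, hν0], by rw [hν'm, hνm], hν'e⟩⟩
    rcases lt_or_gt_of_ne hxy with hlt' | hlt'
    · exact hmain x y hlt' (by omega) hfeq
    · exact hmain y x hlt' (by omega) hfeq.symm
  refine ⟨m, hm1, hcard, ν, hν0, hνm ▸ ht, hνe, ?_⟩
  intro i hi him hieq
  apply hmin (m - i) (by omega)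
  refine ⟨t, ht, (pathLen_iff_fun r _ s t).mpr ⟨fun k => ν (k + i), by simp [hieq], ?_, ?_⟩⟩
  · show ν (m - i + i) = t
    rw [show m - i + i = m by omega, hνm]
  · intro k hk
    show r (ν (k + i)) (ν (k + 1 + i))
    rw [show k + 1 + i = k + i + 1 by omega]
    exact hνe (k + i) (by omega)

end Aux

/-- Approximate verification of a guess (upper bound): with `n = |S|`,
if `f` is a pointwise upper bound on the value vector of the reduced Markov chain
`M[s = γ]`, `γ' = ∑_{s'} δ(s,s')·f(s')`, `ε > 0`, and `γ' - p_min^n·ε < γ`, then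
`val_M(s) < γ + ε`. -/
theorem stmt_7 {S : Type} [Fintype S] [DecidableEq S] [Nonempty S]
    (M : MC S) (hreach : ∀ a : S, reaches M.edge (M.T : Set S) a)
    (w : S → ℝ) (hw : ∀ t ∈ M.T, 0 ≤ w t)
    (s : S) (hs : s ∉ M.T) (γ : ℝ) (hγ : 0 ≤ γ)
    (f : S → ℝ)
    (hf : ∀ a : S, (M.reduce s).reachVal (Function.update w s γ) a ≤ f a)
    (ε : ℝ) (hε : 0 < ε)
    (h : (∑ s' : S, M.δ s s' * f s') - M.pmin ^ (Fintype.card S) * ε < γ) :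
    M.reachVal w s < γ + ε := by
  classical
  set M' := M.reduce s with hM'
  set w' := Function.update w s γ with hw'def
  set wq : S → ℝ := fun b => if b = s then 1 else 0 with hwq
  set w1 : S → ℝ := fun b => if b ∈ M.T then 1 else 0 with hw1
  have hsT' : s ∈ M'.T := Finset.mem_insert_self s M.T
  have hw'0 : ∀ t ∈ M'.T, 0 ≤ w' t := by
    intro t ht
    rcases Finset.mem_insert.mp ht with rfl | ht'
    · simpa [hw'def] using hγ
    · have hts : t ≠ s := fun hh => hs (hh ▸ ht')
      simpa [hw'def, Function.update_of_ne hts] using hw t ht'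
  have hwq0 : ∀ t ∈ M'.T, 0 ≤ wq t := by
    intro t _
    show (0:ℝ) ≤ if t = s then 1 else 0
    split <;> norm_num
  have hw10 : ∀ t ∈ M'.T, 0 ≤ w1 t := by
    intro t _
    show (0:ℝ) ≤ if t ∈ M.T then 1 else 0
    split <;> norm_num
  set g : S → ℝ := fun a => M'.reachVal w' a with hg
  set q : S → ℝ := fun a => M'.reachVal wq a with hq
  -- values at absorbing states
  have hgs : g s = γ := by
    show M'.reachVal w' s = γ
    rw [M'.reachVal_target hsT']
    simp [hw'def]
  have hqs : q s = 1 := by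
    show M'.reachVal wq s = 1
    rw [M'.reachVal_target hsT']
    simp [hwq]
  have hgt : ∀ t ∈ M.T, g t = w t := by
    intro t ht
    have hts : t ≠ s := fun hh => hs (hh ▸ ht)
    show M'.reachVal w' t = w t
    rw [M'.reachVal_target (Finset.mem_insert_of_mem ht)]
    simp [hw'def, Function.update_of_ne hts]
  have hqt : ∀ t ∈ M.T, q t = 0 := by
    intro t ht
    have hts : t ≠ s := fun hh => hs (hh ▸ ht)
    show M'.reachVal wq t = 0
    rw [M'.reachVal_target (Finset.mem_insert_of_mem ht)]
    simp [hwq, hts]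
  -- harmonicity away from s
  have hgH : ∀ a, a ≠ s → g a = ∑ b, M.δ a b * g b := by
    intro a ha
    have hh := M'.reachVal_harmonic hw'0 a
    show M'.reachVal w' a = _
    rw [hh]
    exact Finset.sum_congr rfl fun b _ => by rw [M.reduce_δ_of_ne ha b]
  have hqH : ∀ a, a ≠ s → q a = ∑ b, M.δ a b * q b := by
    intro a ha
    have hh := M'.reachVal_harmonic hwq0 a
    show M'.reachVal wq a = _
    rw [hh]
    exact Finset.sum_congr rfl fun b _ => by rw [M.reduce_δ_of_ne ha b]
  have hg0 : ∀ a, 0 ≤ g a := fun a => M'.reachVal_nonneg hw'0 a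
  have hq0 : ∀ a, 0 ≤ q a := fun a => M'.reachVal_nonneg hwq0 a
  have hq_le_one : ∀ a, q a ≤ 1 := by
    intro a
    apply M'.reachVal_le
    intro k
    calc M'.seq wq a k ≤ ∑ t ∈ M'.T, (M'.P ^ k) a t := by
          apply Finset.sum_le_sum
          intro t ht
          have : wq t ≤ 1 := by
            show (if t = s then (1:ℝ) else 0) ≤ 1
            split <;> norm_num
          calc (M'.P ^ k) a t * wq t ≤ (M'.P ^ k) a t * 1 :=
                mul_le_mul_of_nonneg_left this (M'.P_pow_nonneg k a t)
            _ = (M'.P ^ k) a t := mul_one _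
      _ ≤ ∑ t, (M'.P ^ k) a t :=
          Finset.sum_le_sum_of_subset_of_nonneg (Finset.subset_univ _)
            (fun t _ _ => M'.P_pow_nonneg k a t)
      _ = 1 := M'.P_pow_rowsum k a
  -- pmin facts
  have hp0 : 0 < M.pmin := M.pmin_pos
  have hp1 : M.pmin ≤ 1 := M.pmin_le_one
  set c : ℝ := M.pmin ^ (Fintype.card S) with hcdef
  have hc : 0 < c := pow_pos hp0 _
  -- the short path from s
  obtain ⟨m, hm1, hcard, ν, hν0, hνm, hνe, hνs⟩ :=
    exists_short_path M.edge M.T s (hreach s) hs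
  have hδs1 : 0 < M.δ s (ν 1) := by
    have := hνe 0 (by omega)
    rwa [hν0] at this
  -- path lower bound in the reduced chain
  have hpath : M.pmin ^ (m - 1) ≤ (M'.P ^ (m - 1)) (ν 1) (ν m) := by
    have hstep : ∀ i < m - 1, M.pmin ≤ M'.δ (ν (i + 1)) (ν (i + 1 + 1)) := by
      intro i hi
      have hne : ν (i + 1) ≠ s := hνs (i + 1) (by omega) (by omega)
      rw [hM', M.reduce_δ_of_ne hne]
      exact M.pmin_le (hνe (i + 1) (by omega))
    have := M'.P_pow_path_le hp0.le (m - 1) (fun i => ν (i + 1)) hstep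
    simp only [show m - 1 + 1 = m by omega] at this
    exact this
  have hseq_w1 : M.pmin ^ (m - 1) ≤ M'.seq w1 (ν 1) (m - 1) := by
    have hmem : ν m ∈ M'.T := Finset.mem_insert_of_mem hνm
    have hterm : (M'.P ^ (m - 1)) (ν 1) (ν m) * w1 (ν m)
        ≤ M'.seq w1 (ν 1) (m - 1) :=
      Finset.single_le_sum
        (f := fun t => (M'.P ^ (m - 1)) (ν 1) t * w1 t)
        (fun t ht => mul_nonneg (M'.P_pow_nonneg _ _ _) (hw10 t ht)) hmem
    have hw1νm : w1 (ν m) = 1 := by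
      show (if ν m ∈ M.T then (1:ℝ) else 0) = 1
      rw [if_pos hνm]
    rw [hw1νm, mul_one] at hterm
    exact le_trans hpath hterm
  -- combined bound : q (ν 1) ≤ 1 - pmin^(m-1)
  have hsum_le : ∀ (a : S) (k : ℕ), M'.seq wq a k + M'.seq w1 a k ≤ 1 := by
    intro a k
    have hcomb : ∀ t : S, wq t + w1 t ≤ 1 := by
      intro t
      show (if t = s then (1:ℝ) else 0) + (if t ∈ M.T then (1:ℝ) else 0) ≤ 1
      by_cases hts : t = s
      · subst hts; rw [if_pos rfl, if_neg hs]; norm_num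
      · rw [if_neg hts]; split <;> norm_num
    calc M'.seq wq a k + M'.seq w1 a k
        = ∑ t ∈ M'.T, (M'.P ^ k) a t * (wq t + w1 t) := by
          unfold MC.seq
          rw [← Finset.sum_add_distrib]
          exact Finset.sum_congr rfl fun t _ => by ring
      _ ≤ ∑ t ∈ M'.T, (M'.P ^ k) a t := by
          apply Finset.sum_le_sum
          intro t ht
          calc (M'.P ^ k) a t * (wq t + w1 t) ≤ (M'.P ^ k) a t * 1 :=
                mul_le_mul_of_nonneg_left (hcomb t) (M'.P_pow_nonneg k a t)
            _ = (M'.P ^ k) a t := mul_one _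
      _ ≤ ∑ t, (M'.P ^ k) a t :=
          Finset.sum_le_sum_of_subset_of_nonneg (Finset.subset_univ _)
            (fun t _ _ => M'.P_pow_nonneg k a t)
      _ = 1 := M'.P_pow_rowsum k a
  have hq1 : q (ν 1) ≤ 1 - M.pmin ^ (m - 1) := by
    show M'.reachVal wq (ν 1) ≤ _
    apply M'.reachVal_le
    intro k
    have h1 : M'.seq wq (ν 1) k ≤ M'.seq wq (ν 1) (max k (m - 1)) :=
      M'.seq_mono hwq0 (ν 1) (le_max_left _ _)
    have h2 : M'.seq w1 (ν 1) (m - 1) ≤ M'.seq w1 (ν 1) (max k (m - 1)) :=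
      M'.seq_mono hw10 (ν 1) (le_max_right _ _)
    have h3 := hsum_le (ν 1) (max k (m - 1))
    linarith [hseq_w1]
  -- bound on the return quantity Q
  have hQ : ∑ b, M.δ s b * q b ≤ 1 - c := by
    have hsplit : ∑ b, M.δ s b * q b
        = M.δ s (ν 1) * q (ν 1) + ∑ b ∈ Finset.univ.erase (ν 1), M.δ s b * q b :=
      (Finset.add_sum_erase _ (fun b => M.δ s b * q b) (Finset.mem_univ (ν 1))).symm
    have hrest : ∑ b ∈ Finset.univ.erase (ν 1), M.δ s b * q b
        ≤ ∑ b ∈ Finset.univ.erase (ν 1), M.δ s b := by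
      apply Finset.sum_le_sum
      intro b _
      calc M.δ s b * q b ≤ M.δ s b * 1 :=
            mul_le_mul_of_nonneg_left (hq_le_one b) (M.nonneg s b)
        _ = M.δ s b := mul_one _
    have hrow : M.δ s (ν 1) + ∑ b ∈ Finset.univ.erase (ν 1), M.δ s b = 1 := by
      rw [Finset.add_sum_erase _ (fun b => M.δ s b) (Finset.mem_univ (ν 1))]
      exact M.rowsum s
    have hterm1 : M.δ s (ν 1) * q (ν 1) ≤ M.δ s (ν 1) * (1 - M.pmin ^ (m - 1)) :=
      mul_le_mul_of_nonneg_left hq1 (M.nonneg s (ν 1))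
    have hcle : c ≤ M.δ s (ν 1) * M.pmin ^ (m - 1) := by
      have hmn : M.pmin ^ (Fintype.card S) ≤ M.pmin ^ m :=
        pow_le_pow_of_le_one hp0.le hp1 (by
          have : 1 ≤ Fintype.card S := Fintype.card_pos
          omega)
      have hmm : M.pmin ^ m = M.pmin * M.pmin ^ (m - 1) := by
        rw [← pow_succ']
        congr 1
        omega
      rw [hcdef]
      calc M.pmin ^ (Fintype.card S) ≤ M.pmin ^ m := hmn
        _ = M.pmin * M.pmin ^ (m - 1) := hmm
        _ ≤ M.δ s (ν 1) * M.pmin ^ (m - 1) :=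
            mul_le_mul_of_nonneg_right (M.pmin_le hδs1) (pow_nonneg hp0.le _)
    calc ∑ b, M.δ s b * q b
        = M.δ s (ν 1) * q (ν 1) + ∑ b ∈ Finset.univ.erase (ν 1), M.δ s b * q b := hsplit
      _ ≤ M.δ s (ν 1) * (1 - M.pmin ^ (m - 1))
          + ∑ b ∈ Finset.univ.erase (ν 1), M.δ s b := by linarith
      _ = 1 - M.δ s (ν 1) * M.pmin ^ (m - 1) := by
          rw [mul_sub, mul_one]
          linarith
      _ ≤ 1 - c := by linarith
  -- the certificate constant d
  set γ' : ℝ := ∑ b, M.δ s b * f b with hγ'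
  have hγ'lt : γ' - c * ε < γ := h
  set d : ℝ := max ((γ' - γ) / c) (ε / 2) with hd
  have hd0 : 0 < d := lt_of_lt_of_le (half_pos hε) (le_max_right _ _)
  have hdε : d < ε := by
    apply max_lt
    · rw [div_lt_iff₀ hc]
      linarith [hγ'lt]
    · linarith
  have hdc : γ' - γ ≤ d * c := by
    have := le_max_left ((γ' - γ) / c) (ε / 2)
    rw [div_le_iff₀ hc] at this
    linarith [this]
  have hgf : ∑ b, M.δ s b * g b ≤ γ' := by
    rw [hγ']
    apply Finset.sum_le_sum
    intro b _
    exact mul_le_mul_of_nonneg_left (hf b) (M.nonneg s b)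
  -- the superharmonic certificate
  set u : S → ℝ := fun b => g b + d * q b with hu
  have hsplitu : ∀ a, ∑ b, M.δ a b * u b
      = (∑ b, M.δ a b * g b) + d * ∑ b, M.δ a b * q b := by
    intro a
    rw [Finset.mul_sum, ← Finset.sum_add_distrib]
    exact Finset.sum_congr rfl fun b _ => by show M.δ a b * (g b + d * q b) = _; ring
  have hfinal : M.reachVal w s ≤ u s := by
    apply M.reachVal_le_of_superharmonic hw u
    · intro t ht
      show w t ≤ g t + d * q t
      rw [hgt t ht, hqt t ht, mul_zero, add_zero]
    · intro b
      exact add_nonneg (hg0 b) (mul_nonneg hd0.le (hq0 b))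
    · intro a ha
      by_cases has : a = s
      · rw [has, hsplitu]
        have hQ' : d * ∑ b, M.δ s b * q b ≤ d * (1 - c) :=
          mul_le_mul_of_nonneg_left hQ hd0.le
        have hus : u s = γ + d := by
          show g s + d * q s = γ + d
          rw [hgs, hqs, mul_one]
        rw [hus]
        have hdcd : d * c ≤ d := by
          calc d * c ≤ d * 1 :=
              mul_le_mul_of_nonneg_left (pow_le_one₀ hp0.le hp1) hd0.le
            _ = d := mul_one _
        linarith [hgf, hQ', hdc]
      · rw [hsplitu, ← hgH a has, ← hqH a has]
  have hus : u s = γ + d := by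
    show g s + d * q s = γ + d
    rw [hgs, hqs, mul_one]
  rw [hus] at hfinal
  linarith
end
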